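/- Let 0 < ε ≤ 1/4 and set M := (ρμ/24)·(σ/(h−l))². Define v(q) := μ + M·max(q/ε − 1, 0)³ for q ∈ [0, 2ε]. Then v is twice continuously differentiable on (0, 2ε) with v''(q) = (6M/ε²)·max(q/ε − 1, 0), and for every q ∈ (0, 2ε) one has ρ·v(q) − (1/2)·((h−l)/σ)²·q²·(1−q)²·v''(q) ≥ ρμ/2 > 0. -/

import Mathlib

set_option autoImplicit false

lemma hasDerivAt_maxsq (x : ℝ) :
    HasDerivAt (fun y : ℝ => max y 0 ^ 2) (2 * max x 0) x := by
  rcases lt_trichotomy x 0 with hx | hx | hx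
  · have h0 : HasDerivAt (fun _ : ℝ => (0:ℝ)) 0 x := hasDerivAt_const x 0
    have heq : (fun _ : ℝ => (0:ℝ)) =ᶠ[nhds x] (fun y : ℝ => max y 0 ^ 2) := by
      filter_upwards [Iio_mem_nhds hx] with y hy
      have : y < 0 := hy
      simp [max_eq_right this.le]
    rw [max_eq_right hx.le, mul_zero]
    exact h0.congr_of_eventuallyEq heq.symm
  · subst hx
    rw [hasDerivAt_iff_tendsto_slope]
    have hb : ∀ y : ℝ, ‖slope (fun y : ℝ => max y 0 ^ 2) 0 y‖ ≤ |y| := by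
      intro y
      rcases eq_or_ne y 0 with rfl | hy
      · simp [slope]
      · rw [slope_def_field]
        have h1 : |max y 0 ^ 2 - max 0 0 ^ 2| ≤ |y| * |y| := by
          rw [max_self, zero_pow (by norm_num : (2:ℕ) ≠ 0), sub_zero,
            abs_of_nonneg (by positivity)]
          have h2 : max y 0 ≤ |y| := max_le (le_abs_self y) (abs_nonneg y)
          nlinarith [le_max_right y 0]
        rw [Real.norm_eq_abs, abs_div, sub_zero,
          div_le_iff₀ (abs_pos.mpr hy)]
        simpa using h1
    have htend : Filter.Tendsto (fun y : ℝ => |y|) (nhdsWithin 0 {(0:ℝ)}ᶜ) (nhds 0) := by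
      have := continuous_abs.tendsto (0:ℝ)
      simpa using this.mono_left nhdsWithin_le_nhds
    simpa using squeeze_zero_norm hb htend
  · have h0 : HasDerivAt (fun y : ℝ => y ^ 2) (2 * x) x := by
      simpa using (hasDerivAt_pow 2 x)
    have heq : (fun y : ℝ => y ^ 2) =ᶠ[nhds x] (fun y : ℝ => max y 0 ^ 2) := by
      filter_upwards [Ioi_mem_nhds hx] with y hy
      have : 0 < y := hy
      rw [max_eq_left this.le]
    rw [max_eq_left hx.le]
    exact h0.congr_of_eventuallyEq heq.symm

lemma hasDerivAt_maxcube (x : ℝ) :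
    HasDerivAt (fun y : ℝ => max y 0 ^ 3) (3 * max x 0 ^ 2) x := by
  have h := (hasDerivAt_id x).mul (hasDerivAt_maxsq x)
  have heq : (fun y : ℝ => id y * max y 0 ^ 2) = fun y : ℝ => max y 0 ^ 3 := by
    funext y
    rcases le_or_gt y 0 with hy | hy
    · simp [max_eq_right hy]
    · rw [max_eq_left hy.le]; simp [id]; ring
  rw [show (id * fun y : ℝ => max y 0 ^ 2) = fun y : ℝ => max y 0 ^ 3 from heq] at h
  refine h.congr_deriv ?_
  rcases le_or_gt x 0 with hx | hx
  · simp [max_eq_right hx]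
  · rw [max_eq_left hx.le]; simp [id]; ring

/-- With `M = (ρμ/24)(σ/(h−l))²` and
`v(q) = μ + M max(q/ε − 1, 0)³` on `[0,2ε]`, the function `v` is twice continuously
differentiable on `(0,2ε)` with `v''(q) = (6M/ε²) max(q/ε − 1, 0)`, and
`ρ v(q) − ½((h−l)/σ)² q²(1−q)² v''(q) ≥ ρμ/2 > 0` for every `q ∈ (0,2ε)`. -/
theorem stmt_15 (l μ h ρ σ : ℝ)
    (hl : 0 < l) (hlμ : l < μ) (hμh : μ < h) (hρ : 0 < ρ) (hσ : 0 < σ)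
    (ε : ℝ) (hε : 0 < ε) (hε' : ε ≤ 1 / 4)
    (M : ℝ) (hM : M = (ρ * μ / 24) * (σ / (h - l)) ^ 2)
    (v : ℝ → ℝ)
    (hv : ∀ q : ℝ, v q = μ + M * (max (q / ε - 1) 0) ^ 3) :
    ContDiffOn ℝ 2 v (Set.Ioo 0 (2 * ε))
    ∧ (∀ q ∈ Set.Ioo (0 : ℝ) (2 * ε),
        deriv (deriv v) q = (6 * M / ε ^ 2) * max (q / ε - 1) 0)
    ∧ (∀ q ∈ Set.Ioo (0 : ℝ) (2 * ε),
        ρ * v q - (1 / 2) * ((h - l) / σ) ^ 2 * q ^ 2 * (1 - q) ^ 2 * deriv (deriv v) q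
          ≥ ρ * μ / 2)
    ∧ 0 < ρ * μ / 2 := by
  have hμ0 : 0 < μ := hl.trans hlμ
  have hhl : 0 < h - l := by linarith
  have hM0 : 0 < M := by rw [hM]; positivity
  have hεne : ε ≠ 0 := hε.ne'
  have hinner : ∀ q : ℝ, HasDerivAt (fun q : ℝ => q / ε - 1) (1 / ε) q := by
    intro q
    simpa using ((hasDerivAt_id q).div_const ε).sub_const 1
  have hd1 : ∀ q : ℝ, HasDerivAt v (3 * M / ε * max (q / ε - 1) 0 ^ 2) q := by
    intro q
    have hcomp := (hasDerivAt_maxcube (q / ε - 1)).comp q (hinner q)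
    have h1 := (hcomp.const_mul M).const_add μ
    have h2 : HasDerivAt v (M * (3 * max (q / ε - 1) 0 ^ 2 * (1 / ε))) q := by
      apply h1.congr_of_eventuallyEq
      exact Filter.Eventually.of_forall (fun y => by rw [hv y]; simp [Function.comp])
    convert h2 using 1
    ring
  have hderiv1 : deriv v = fun q : ℝ => 3 * M / ε * max (q / ε - 1) 0 ^ 2 := by
    funext q; exact (hd1 q).deriv
  have hd2 : ∀ q : ℝ, HasDerivAt (deriv v) (6 * M / ε ^ 2 * max (q / ε - 1) 0) q := by
    intro q
    rw [hderiv1]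
    have hcomp := ((hasDerivAt_maxsq (q / ε - 1)).comp q (hinner q)).const_mul (3 * M / ε)
    refine hcomp.congr_deriv ?_
    field_simp
    ring
  have hderiv2 : ∀ q : ℝ, deriv (deriv v) q = 6 * M / ε ^ 2 * max (q / ε - 1) 0 :=
    fun q => (hd2 q).deriv
  have hsmooth : ContDiff ℝ 2 v := by
    rw [show (2 : WithTop ℕ∞) = 1 + 1 from rfl, contDiff_succ_iff_deriv]
    refine ⟨fun q => (hd1 q).differentiableAt, by simp, ?_⟩
    rw [contDiff_one_iff_deriv]
    refine ⟨fun q => (hd2 q).differentiableAt, ?_⟩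
    have hdd : deriv (deriv v) = fun q : ℝ => 6 * M / ε ^ 2 * max (q / ε - 1) 0 :=
      funext hderiv2
    rw [hdd]
    exact continuous_const.mul
      (((continuous_id.div_const ε).sub continuous_const).max continuous_const)
  refine ⟨hsmooth.contDiffOn, fun q _ => hderiv2 q, ?_, by positivity⟩
  intro q hq
  obtain ⟨hq0, hq2⟩ := hq
  rw [hderiv2 q, hv q]
  set t := max (q / ε - 1) 0 with ht
  have ht0 : 0 ≤ t := le_max_right _ _
  have ht1 : t ≤ 1 := by
    have hqe : q / ε < 2 := by rw [div_lt_iff₀ hε]; linarith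
    exact max_le (by linarith) (by norm_num)
  have hq1 : q < 1 := by linarith
  have hCM : ((h - l) / σ) ^ 2 * M = ρ * μ / 24 := by
    rw [hM]; field_simp
  have hεsq : (0:ℝ) < ε ^ 2 := by positivity
  have hX : q ^ 2 * (1 - q) ^ 2 * t / ε ^ 2 ≤ 4 := by
    rw [div_le_iff₀ hεsq]
    have h1q : (1 - q) ^ 2 * t ≤ 1 := by nlinarith
    have hq2sq : q ^ 2 ≤ 4 * ε ^ 2 := by nlinarith
    calc q ^ 2 * (1 - q) ^ 2 * t = q ^ 2 * ((1 - q) ^ 2 * t) := by ring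
      _ ≤ q ^ 2 * 1 := by nlinarith [sq_nonneg q]
      _ ≤ 4 * ε ^ 2 := by linarith
  have hterm : (1 / 2) * ((h - l) / σ) ^ 2 * q ^ 2 * (1 - q) ^ 2 * (6 * M / ε ^ 2 * t)
      = (ρ * μ / 8) * (q ^ 2 * (1 - q) ^ 2 * t / ε ^ 2) := by
    rw [show (1 / 2) * ((h - l) / σ) ^ 2 * q ^ 2 * (1 - q) ^ 2 * (6 * M / ε ^ 2 * t)
        = 3 * (((h - l) / σ) ^ 2 * M) * (q ^ 2 * (1 - q) ^ 2 * t) / ε ^ 2 by ring, hCM]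
    ring
  rw [ge_iff_le]
  have hvlb : ρ * μ ≤ ρ * (μ + M * t ^ 3) := by
    nlinarith [mul_nonneg (mul_nonneg hρ.le hM0.le) (pow_nonneg ht0 3)]
  have hub : (ρ * μ / 8) * (q ^ 2 * (1 - q) ^ 2 * t / ε ^ 2) ≤ ρ * μ / 2 := by
    have := mul_le_mul_of_nonneg_left hX (by positivity : (0:ℝ) ≤ ρ * μ / 8)
    linarith
  linarith [hterm ▸ hub]
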